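/- The algebra A₀ = k⟨a,b⟩/(ab+ba, a²+b^{2n+1}) is graded by assigning weights wt(a) = 2n+1, wt(b) = 2, and the 6n+3 monomials a^s b^t for 0 ≤ s ≤ 2, 0 ≤ t ≤ 2n form a k-linear basis of A₀; in particular dim_k A₀ = 6n+3. -/

import Mathlib

noncomputable section

variable {k : Type*} [Field k] [CharZero k]

def Fa (k : Type*) [Field k] : FreeAlgebra k (Fin 2) := FreeAlgebra.ι k 0
def Fb (k : Type*) [Field k] : FreeAlgebra k (Fin 2) := FreeAlgebra.ι k 1

/-- Relations ab+ba = 0 and a²+b^{2n+1} = 0, defining A₀. -/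
inductive A0Rel (k : Type*) [Field k] (n : ℕ) :
    FreeAlgebra k (Fin 2) → FreeAlgebra k (Fin 2) → Prop
  | anticomm : A0Rel k n (Fa k * Fb k + Fb k * Fa k) 0
  | equation : A0Rel k n (Fa k ^ 2 + Fb k ^ (2*n+1)) 0

abbrev A0 (k : Type*) [Field k] (n : ℕ) := RingQuot (A0Rel k n)

def qa (k : Type*) [Field k] (n : ℕ) : A0 k n := RingQuot.mkAlgHom k (A0Rel k n) (Fa k)
def qb (k : Type*) [Field k] (n : ℕ) : A0 k n := RingQuot.mkAlgHom k (A0Rel k n) (Fb k)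

namespace A0Aux

set_option linter.unusedSectionVars false

variable (k) (n : ℕ)

lemma smul_cancel {c : k} (hc : c ≠ 0) {x : A0 k n} (h : c • x = 0) : x = 0 := by
  have h2 := congrArg (fun y => c⁻¹ • y) h
  simpa [smul_smul, inv_mul_cancel₀ hc] using h2

lemma neg_of_add_eq_zero {x y : A0 k n} (h : x + y = 0) : x = (-1:k) • y := by
  have h1 : x = -y := eq_neg_of_add_eq_zero_left h
  have h2 : ((-1:k)) • y = -y := neg_one_smul k y
  exact h1.trans h2.symm

lemma rel_anti : qa k n * qb k n + qb k n * qa k n = 0 := by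
  have h := RingQuot.mkAlgHom_rel k (A0Rel.anticomm (k := k) (n := n))
  simpa [qa, qb, map_add, map_mul] using h

lemma rel_sq : qa k n ^ 2 + qb k n ^ (2*n+1) = 0 := by
  have h := RingQuot.mkAlgHom_rel k (A0Rel.equation (k := k) (n := n))
  simpa [qa, qb, map_add, map_mul, map_pow] using h

lemma ba : qb k n * qa k n = (-1:k) • (qa k n * qb k n) :=
  neg_of_add_eq_zero k n (by rw [add_comm]; exact rel_anti k n)

lemma asq : qa k n ^ 2 = (-1:k) • qb k n ^ (2*n+1) :=
  neg_of_add_eq_zero k n (rel_sq k n)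

lemma bsq : qb k n ^ (2*n+1) = (-1:k) • qa k n ^ 2 :=
  neg_of_add_eq_zero k n (by rw [add_comm]; exact rel_sq k n)

lemma bpow_a (m : ℕ) : qb k n ^ m * qa k n = ((-1 : k) ^ m) • (qa k n * qb k n ^ m) := by
  induction m with
  | zero => simp
  | succ m ih =>
    rw [pow_succ', mul_assoc, ih, mul_smul_comm, ← mul_assoc, ba, smul_mul_assoc,
      smul_smul, mul_comm ((-1:k)^m), ← pow_succ', mul_assoc, ← pow_succ']

lemma bpow_apow (t s : ℕ) :
    qb k n ^ t * qa k n ^ s = ((-1 : k) ^ (t*s)) • (qa k n ^ s * qb k n ^ t) := by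
  induction s with
  | zero => simp
  | succ s ih =>
    rw [pow_succ, ← mul_assoc, ih, smul_mul_assoc, mul_assoc, bpow_a, mul_smul_comm,
      smul_smul, ← mul_assoc, ← pow_succ, ← pow_add, Nat.mul_succ]

lemma acube : qa k n ^ 3 = 0 := by
  have hodd : ((-1:k) ^ (2*n+1)) = -1 := Odd.neg_one_pow ⟨n, by ring⟩
  have h2 : qb k n ^ (2*n+1) * qa k n = (-1:k) • (qa k n * qb k n ^ (2*n+1)) := by
    rw [bpow_a, hodd]
  have h3 : qa k n ^ 3 = (-1:k) • (qa k n * qb k n ^ (2*n+1)) := by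
    rw [show (3:ℕ) = 1+2 from rfl, pow_add, pow_one, asq, mul_smul_comm]
  have h1 : qa k n ^ 3 = qa k n * qb k n ^ (2*n+1) := by
    rw [show (3:ℕ) = 2+1 from rfl, pow_add, pow_one, asq, smul_mul_assoc, h2, smul_smul]
    norm_num
  have h5 : (2:k) • qa k n ^ 3 = 0 := by
    rw [show ((2:k)) = 1+1 by norm_num, add_smul, one_smul]
    nth_rewrite 2 [h1]
    nth_rewrite 1 [h3]
    nth_rewrite 2 [← one_smul k (qa k n * qb k n ^ (2*n+1))]
    rw [← add_smul]
    norm_num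
  exact smul_cancel k n two_ne_zero h5

lemma apow_eq_zero {s : ℕ} (hs : 3 ≤ s) : qa k n ^ s = 0 := by
  obtain ⟨m, rfl⟩ := Nat.exists_eq_add_of_le hs
  rw [pow_add, acube, zero_mul]

/-- The monomial family. -/
def M : Fin 3 × Fin (2*n+1) → A0 k n :=
  fun p => qa k n ^ (p.1 : ℕ) * qb k n ^ (p.2 : ℕ)

/-- weight/degree of a monomial -/
def deg : Fin 3 × Fin (2*n+1) → ℕ := fun p => (p.1 : ℕ) * (2*n+1) + 2 * (p.2 : ℕ)

/-- Reduction: every monomial a^s b^t is a scalar multiple of a basic one, of equal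
weight when the scalar is nonzero. -/
lemma red (s t : ℕ) : ∃ (c : k) (p : Fin 3 × Fin (2*n+1)),
    qa k n ^ s * qb k n ^ t = c • M k n p ∧
    (c ≠ 0 → deg n p = s * (2*n+1) + 2 * t) := by
  by_cases hs : 3 ≤ s
  · exact ⟨0, (⟨0, by omega⟩, ⟨0, by omega⟩), by rw [apow_eq_zero k n hs, zero_mul, zero_smul],
      fun h => absurd rfl h⟩
  · push_neg at hs
    by_cases ht : t ≤ 2*n
    · refine ⟨1, (⟨s, by omega⟩, ⟨t, by omega⟩), ?_, fun _ => rfl⟩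
      rw [one_smul]; rfl
    · push_neg at ht
      obtain ⟨u, rfl⟩ : ∃ u, t = (2*n+1) + u := ⟨t - (2*n+1), by omega⟩
      have key : qa k n ^ s * qb k n ^ (2*n+1+u)
          = (-1:k) • (qa k n ^ (s+2) * qb k n ^ u) := by
        rw [pow_add (qb k n) (2*n+1) u, bsq, smul_mul_assoc, mul_smul_comm, ← mul_assoc,
          ← pow_add]
      rcases Nat.eq_zero_or_pos s with rfl | hs1
      · by_cases hu : u ≤ 2*n
        · refine ⟨-1, (⟨2, by omega⟩, ⟨u, by omega⟩), ?_, fun _ => by simp [deg]; omega⟩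
          rw [key]; rfl
        · push_neg at hu
          obtain ⟨v, rfl⟩ : ∃ v, u = (2*n+1) + v := ⟨u - (2*n+1), by omega⟩
          refine ⟨0, (⟨0, by omega⟩, ⟨0, by omega⟩), ?_, fun h => absurd rfl h⟩
          have key2 : qa k n ^ (0+2) * qb k n ^ (2*n+1+v)
              = (-1:k) • (qa k n ^ (0+2+2) * qb k n ^ v) := by
            rw [pow_add (qb k n) (2*n+1) v, bsq, smul_mul_assoc, mul_smul_comm, ← mul_assoc,
              ← pow_add]
          rw [key, key2, apow_eq_zero k n (by omega), zero_mul, smul_zero, smul_zero, zero_smul]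
      · refine ⟨0, (⟨0, by omega⟩, ⟨0, by omega⟩), ?_, fun h => absurd rfl h⟩
        rw [key, apow_eq_zero k n (by omega), zero_mul, smul_zero, zero_smul]

/-- product of two basic monomials -/
lemma M_mul (p q : Fin 3 × Fin (2*n+1)) :
    M k n p * M k n q = ((-1:k) ^ ((p.2 : ℕ) * (q.1 : ℕ))) •
      (qa k n ^ ((p.1 : ℕ) + (q.1 : ℕ)) * qb k n ^ ((p.2 : ℕ) + (q.2 : ℕ))) := by
  unfold M
  rw [mul_assoc, ← mul_assoc (qb k n ^ (p.2:ℕ)), bpow_apow, smul_mul_assoc, mul_smul_comm,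
    mul_assoc (qa k n ^ ((q.1:ℕ))), ← mul_assoc (qa k n ^ ((p.1:ℕ))), ← pow_add, ← pow_add]

end A0Aux

namespace A0Model
set_option linter.unusedSectionVars false

variable (k : Type*) [Field k] [CharZero k] (n : ℕ)

abbrev V (k : Type*) [Field k] := (ℕ × ℕ) →₀ k

def e (p : ℕ × ℕ) : V k := Finsupp.single p 1

def bV : Module.Basis (ℕ × ℕ) k (V k) := Finsupp.basisSingleOne

lemma bV_eq (p : ℕ × ℕ) : bV k p = e k p := rfl

def gA : ℕ × ℕ → V k := fun p => if p.1 < 2 ∧ p.2 ≤ 2*n then e k (p.1+1, p.2) else 0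

def gB : ℕ × ℕ → V k := fun p =>
  if p.2 < 2*n then ((-1:k)^p.1) • e k (p.1, p.2+1)
  else if p.1 = 0 ∧ p.2 = 2*n then -(e k (2,0)) else 0

def fA : Module.End k (V k) := (bV k).constr k (gA k n)
def fB : Module.End k (V k) := (bV k).constr k (gB k n)

lemma fA_e (p : ℕ × ℕ) : fA k n (e k p) = if p.1 < 2 ∧ p.2 ≤ 2*n then e k (p.1+1, p.2) else 0 :=
  (bV k).constr_basis k (gA k n) p

lemma fB_e (p : ℕ × ℕ) : fB k n (e k p) =
    (if p.2 < 2*n then ((-1:k)^p.1) • e k (p.1, p.2+1)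
     else if p.1 = 0 ∧ p.2 = 2*n then -(e k (2,0)) else 0) :=
  (bV k).constr_basis k (gB k n) p

lemma fB_pow (m s t : ℕ) (h : t + m ≤ 2*n) :
    (fB k n ^ m) (e k (s, t)) = ((-1:k)^(s*m)) • e k (s, t+m) := by
  induction m generalizing t with
  | zero => simp
  | succ m ih =>
    rw [pow_succ, Module.End.mul_apply, fB_e]
    have ht : t < 2*n := by omega
    rw [if_pos (show (s,t).2 < 2*n from ht)]
    rw [map_smul, show ((s,t).1, (s,t).2 + 1) = ((s : ℕ), t+1) from rfl,
      ih (t+1) (by omega), smul_smul, ← pow_add,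
      show (s,t).1 + s*m = s*(m+1) by simp; ring, show t+1+m = t+(m+1) by omega]

lemma fB_top (s : ℕ) (hs : s ≠ 0) : fB k n (e k (s, 2*n)) = 0 := by
  rw [fB_e]
  simp [hs]

lemma fB_e00 : fB k n (e k (0, 2*n)) = -(e k (2,0)) := by
  rw [fB_e]
  simp

lemma relB : (fB k n) ^ (2*n+1) = 0 → True := fun _ => trivial

lemma fB_pow_zero_of_ge (m s t : ℕ) (hs : s ≠ 0) (h : 2*n < t + m) (ht : t ≤ 2*n) :
    (fB k n ^ m) (e k (s, t)) = 0 := by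
  -- split m = (2*n - t) + rest,  rest ≥ 1
  obtain ⟨r, hr⟩ : ∃ r, m = (r + 1) + (2*n - t) := ⟨m - (2*n-t) - 1, by omega⟩
  subst hr
  rw [pow_add, Module.End.mul_apply, fB_pow k n _ s t (by omega)]
  rw [map_smul, pow_succ, Module.End.mul_apply]
  have h2 : t + (2*n - t) = 2*n := by omega
  rw [h2, fB_top k n s hs]
  simp

lemma fB_zero_high (m s t : ℕ) (h : 2*n < t) : (fB k n ^ (m+1)) (e k (s,t)) = 0 := by
  rw [pow_succ, Module.End.mul_apply, fB_e]
  rw [if_neg (by omega : ¬((s,t).2 < 2*n)), if_neg (by omega : ¬((s,t).1 = 0 ∧ (s,t).2 = 2*n))]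
  simp


lemma relAnti : fA k n * fB k n + fB k n * fA k n = 0 := by
  refine (bV k).ext fun p => ?_
  obtain ⟨s, t⟩ := p
  simp only [bV_eq, LinearMap.add_apply, Module.End.mul_apply, LinearMap.zero_apply,
    fA_e, fB_e, apply_ite (fA k n), apply_ite (fB k n), map_smul, map_neg, map_zero,
    smul_zero, neg_zero, fA_e, fB_e]
  split_ifs <;>
    simp_all [fA_e, fB_e, pow_succ, apply_ite (fA k n), apply_ite (fB k n)] <;>
    first
      | omega
      | (split_ifs <;> simp_all <;> omega)


lemma relSq : fA k n ^ 2 + fB k n ^ (2*n+1) = 0 := by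
  refine (bV k).ext fun p => ?_
  obtain ⟨s, t⟩ := p
  rw [bV_eq, LinearMap.add_apply, LinearMap.zero_apply]
  by_cases ht : t ≤ 2*n
  · by_cases hs : s = 0
    · subst hs
      have hA : (fA k n ^ 2) (e k (0,t)) = e k (2,t) := by
        rw [pow_succ, pow_one, Module.End.mul_apply, fA_e,
          if_pos (show (0,t).1 < 2 ∧ (0,t).2 ≤ 2*n from ⟨by omega, ht⟩), fA_e,
          if_pos (show ((0:ℕ)+1,t).1 < 2 ∧ ((0:ℕ)+1,t).2 ≤ 2*n from ⟨by omega, ht⟩)]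
      have hB : (fB k n ^ (2*n+1)) (e k (0,t)) = -(e k (2,t)) := by
        rw [show 2*n+1 = (t+1)+(2*n-t) by omega, pow_add, Module.End.mul_apply,
          fB_pow k n (2*n-t) 0 t (by omega), show t + (2*n-t) = 2*n by omega]
        simp only [Nat.zero_mul, pow_zero, one_smul]
        rw [pow_succ, Module.End.mul_apply, fB_e00, map_neg,
          fB_pow k n t 2 0 (by omega)]
        simp [pow_mul]
      rw [hA, hB, add_neg_cancel]
    · have hA : (fA k n ^ 2) (e k (s,t)) = 0 := by
        rw [pow_succ, pow_one, Module.End.mul_apply, fA_e]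
        split_ifs with h
        · rw [fA_e, if_neg (by simp; omega)]
        · exact map_zero _
      rw [hA, fB_pow_zero_of_ge k n (2*n+1) s t hs (by omega) ht, add_zero]
  · have hA : (fA k n ^ 2) (e k (s,t)) = 0 := by
      rw [pow_succ, pow_one, Module.End.mul_apply, fA_e, if_neg (by simp; omega),
        map_zero]
    rw [hA, fB_zero_high k n (2*n) s t (by omega), add_zero]

lemma fA_pow (s t : ℕ) (hs : s ≤ 2) (ht : t ≤ 2*n) :
    (fA k n ^ s) (e k (0, t)) = e k (s, t) := by
  interval_cases s
  · simp
  · rw [pow_one, fA_e, if_pos ⟨by norm_num, ht⟩]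
  · rw [pow_succ, pow_one, Module.End.mul_apply, fA_e,
      if_pos (show (0,t).1 < 2 ∧ (0,t).2 ≤ 2*n from ⟨by omega, ht⟩), fA_e,
      if_pos (show ((0:ℕ)+1,t).1 < 2 ∧ ((0:ℕ)+1,t).2 ≤ 2*n from ⟨by omega, ht⟩)]

end A0Model


namespace A0Main

open A0Aux A0Model

variable (k : Type*) [Field k] [CharZero k] (n : ℕ)

set_option linter.unusedSectionVars false

/-- the representation of the free algebra -/
def φ0 : FreeAlgebra k (Fin 2) →ₐ[k] Module.End k (V k) :=
  FreeAlgebra.lift k ![fA k n, fB k n]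

lemma φ0_Fa : φ0 k n (Fa k) = fA k n := by
  simp [φ0, Fa]

lemma φ0_Fb : φ0 k n (Fb k) = fB k n := by
  simp [φ0, Fb]

/-- the representation of A0 -/
def φ : A0 k n →ₐ[k] Module.End k (V k) :=
  RingQuot.liftAlgHom k ⟨φ0 k n, by
    intro x y h
    cases h with
    | anticomm => rw [map_add, map_mul, map_mul, φ0_Fa, φ0_Fb, map_zero, relAnti]
    | equation => rw [map_add, map_pow, map_pow, φ0_Fa, φ0_Fb, map_zero, relSq]⟩

lemma φ_qa : φ k n (qa k n) = fA k n := by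
  rw [qa, φ, RingQuot.liftAlgHom_mkAlgHom_apply, φ0_Fa]

lemma φ_qb : φ k n (qb k n) = fB k n := by
  rw [qb, φ, RingQuot.liftAlgHom_mkAlgHom_apply, φ0_Fb]

/-- evaluation of the representation at the cyclic vector -/
def L : A0 k n →ₗ[k] V k where
  toFun x := φ k n x (e k (0, 0))
  map_add' x y := by rw [map_add, LinearMap.add_apply]
  map_smul' c x := by rw [map_smul, LinearMap.smul_apply, RingHom.id_apply]

lemma L_M (p : Fin 3 × Fin (2*n+1)) : L k n (M k n p) = e k ((p.1 : ℕ), (p.2 : ℕ)) := by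
  have h1 : L k n (M k n p) = (fA k n ^ (p.1:ℕ)) ((fB k n ^ (p.2:ℕ)) (e k (0,0))) := by
    show φ k n (qa k n ^ (p.1:ℕ) * qb k n ^ (p.2:ℕ)) (e k (0,0)) = _
    rw [map_mul, map_pow, map_pow, φ_qa, φ_qb, Module.End.mul_apply]
  rw [h1, fB_pow k n (p.2:ℕ) 0 0 (by have := p.2.isLt; omega)]
  rw [show 0*(p.2:ℕ) = 0 from Nat.zero_mul _, show 0 + (p.2:ℕ) = (p.2:ℕ) from Nat.zero_add _,
    pow_zero, one_smul]
  exact fA_pow k n (p.1:ℕ) (p.2:ℕ) (by have := p.1.isLt; omega) (by have := p.2.isLt; omega)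

lemma M_indep : LinearIndependent k (M k n) := by
  have hinj : Function.Injective (fun p : Fin 3 × Fin (2*n+1) => ((p.1:ℕ), (p.2:ℕ))) := by
    intro p q h
    simp only [Prod.mk.injEq] at h
    exact Prod.ext (Fin.val_injective h.1) (Fin.val_injective h.2)
  have h1 : LinearIndependent k (fun p : Fin 3 × Fin (2*n+1) => e k ((p.1:ℕ), (p.2:ℕ))) :=
    (bV k).linearIndependent.comp _ hinj
  refine LinearIndependent.of_comp (L k n) ?_
  have h2 : (L k n) ∘ (M k n) = fun p : Fin 3 × Fin (2*n+1) => e k ((p.1:ℕ), (p.2:ℕ)) :=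
    funext fun p => L_M k n p
  rw [h2]
  exact h1

lemma span_top (hn : 1 ≤ n) : Submodule.span k (Set.range (M k n)) = ⊤ := by
  have h1 : (1 : A0 k n) ∈ Submodule.span k (Set.range (M k n)) := by
    have hM : M k n (⟨0, by omega⟩, ⟨0, by omega⟩) = 1 := by simp [M]
    exact hM ▸ Submodule.subset_span (Set.mem_range_self _)
  have hmul : ∀ x y : A0 k n, x ∈ Submodule.span k (Set.range (M k n)) →
      y ∈ Submodule.span k (Set.range (M k n)) →
      x * y ∈ Submodule.span k (Set.range (M k n)) := by
    intro x y hx hy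
    have hle : Submodule.span k (Set.range (M k n)) * Submodule.span k (Set.range (M k n)) ≤
        Submodule.span k (Set.range (M k n)) := by
      rw [Submodule.span_mul_span]
      refine Submodule.span_le.mpr ?_
      rintro z ⟨u, ⟨p, rfl⟩, v, ⟨q, rfl⟩, rfl⟩
      beta_reduce
      rw [SetLike.mem_coe, M_mul]
      obtain ⟨c, p', hc, -⟩ := red k n ((p.1:ℕ) + (q.1:ℕ)) ((p.2:ℕ) + (q.2:ℕ))
      rw [hc]
      exact Submodule.smul_mem _ _ (Submodule.smul_mem _ _
        (Submodule.subset_span ⟨p', rfl⟩))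
    exact Submodule.mul_le.mp hle x hx y hy
  let S : Subalgebra k (A0 k n) :=
    Submodule.toSubalgebra (Submodule.span k (Set.range (M k n))) h1 hmul
  have hqa : qa k n ∈ S := by
    have hM : M k n (⟨1, by omega⟩, ⟨0, by omega⟩) = qa k n := by simp [M]
    exact hM ▸ Submodule.subset_span (Set.mem_range_self _)
  have hqb : qb k n ∈ S := by
    have hM : M k n (⟨0, by omega⟩, ⟨1, by omega⟩) = qb k n := by simp [M]
    exact hM ▸ Submodule.subset_span (Set.mem_range_self _)
  have hS : S = ⊤ := by
    rw [eq_top_iff]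
    intro x hx
    obtain ⟨y, rfl⟩ := RingQuot.mkAlgHom_surjective k (A0Rel k n) x
    clear hx
    induction y using FreeAlgebra.induction with
    | grade0 c =>
      rw [AlgHom.commutes]
      exact S.algebraMap_mem c
    | grade1 i =>
      fin_cases i
      · exact hqa
      · exact hqb
    | mul a b ha hb => rw [map_mul]; exact S.mul_mem ha hb
    | add a b ha hb => rw [map_add]; exact S.add_mem ha hb
  have : Subalgebra.toSubmodule S = ⊤ := Algebra.toSubmodule_eq_top.mpr hS
  exact this

/-- The grading. -/
def Gr : ℕ → Submodule k (A0 k n) := fun d =>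
  Submodule.span k (M k n '' {p | deg n p = d})

lemma mono_mem (s t : ℕ) : qa k n ^ s * qb k n ^ t ∈ Gr k n (s*(2*n+1)+2*t) := by
  obtain ⟨c, p, hc, hd⟩ := red k n s t
  rw [hc]
  by_cases h : c = 0
  · rw [h, zero_smul]; exact zero_mem _
  · exact Submodule.smul_mem _ _ (Submodule.subset_span ⟨p, hd h, rfl⟩)

lemma Gr_one : (1 : A0 k n) ∈ Gr k n 0 := by
  have := mono_mem k n 0 0
  simpa using this

lemma Gr_mul ⦃i j : ℕ⦄ {x y : A0 k n} (hx : x ∈ Gr k n i) (hy : y ∈ Gr k n j) :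
    x * y ∈ Gr k n (i + j) := by
  have hle : Gr k n i * Gr k n j ≤ Gr k n (i+j) := by
    rw [Gr, Gr, Submodule.span_mul_span]
    refine Submodule.span_le.mpr ?_
    rintro z ⟨u, ⟨p, hp, rfl⟩, v, ⟨q, hq, rfl⟩, rfl⟩
    beta_reduce
    rw [SetLike.mem_coe, M_mul]
    have hw : ((p.1:ℕ) + (q.1:ℕ))*(2*n+1) + 2*((p.2:ℕ) + (q.2:ℕ)) = i + j := by
      rw [← hp, ← hq]; simp [deg]; ring
    exact Submodule.smul_mem _ _ (hw ▸ mono_mem k n _ _)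
  exact Submodule.mul_le.mp hle x hx y hy

lemma Gr_iSup (hn : 1 ≤ n) : ⨆ d, Gr k n d = ⊤ := by
  have h1 : ⋃ d, (M k n '' {p | deg n p = d}) = Set.range (M k n) := by
    ext x
    constructor
    · rintro ⟨s, ⟨d, rfl⟩, p, hp, rfl⟩
      exact ⟨p, rfl⟩
    · rintro ⟨p, rfl⟩
      exact Set.mem_iUnion.mpr ⟨deg n p, ⟨p, rfl, rfl⟩⟩
  show (⨆ d, Submodule.span k (M k n '' {p | deg n p = d})) = ⊤
  rw [← Submodule.span_iUnion, h1, span_top k n hn]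

lemma Gr_indep (hn : 1 ≤ n) : iSupIndep (Gr k n) := by
  let b : Module.Basis (Fin 3 × Fin (2*n+1)) k (A0 k n) :=
    Module.Basis.mk (M_indep k n) (by rw [span_top k n hn])
  have hb : ∀ s : Set (Fin 3 × Fin (2*n+1)),
      Submodule.span k (M k n '' s) = Submodule.span k (⇑b '' s) := by
    intro s
    congr 1
    exact Set.image_congr fun p _ => (Module.Basis.mk_apply _ _ _).symm
  refine iSupIndep_def.mpr fun d => ?_
  have h2 : (⨆ (j) (_ : j ≠ d), Gr k n j) ≤
      Submodule.span k (⇑b '' {p | deg n p ≠ d}) := by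
    refine iSup_le fun j => iSup_le fun hj => ?_
    rw [Gr, hb]
    exact Submodule.span_mono (Set.image_mono (fun p hp => by
      simp only [Set.mem_setOf_eq] at hp ⊢
      omega))
  refine Disjoint.mono_right h2 ?_
  rw [Gr, hb, Submodule.disjoint_def]
  intro x hx1 hx2
  rw [Module.Basis.mem_span_image] at hx1 hx2
  have hsupp : (b.repr x).support = ∅ := by
    ext p
    simp only [Finset.mem_coe, Finset.notMem_empty, iff_false]
    intro hp
    have h1 := hx1 hp
    have h2 := hx2 hp
    simp only [Set.mem_setOf_eq] at h1 h2
    exact h2 h1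
  have : b.repr x = 0 := Finsupp.support_eq_empty.mp hsupp
  exact (LinearEquiv.map_eq_zero_iff _).mp this

lemma Gr_internal (hn : 1 ≤ n) : DirectSum.IsInternal (Gr k n) :=
  DirectSum.isInternal_submodule_of_iSupIndep_of_iSup_eq_top (Gr_indep k n hn)
    (Gr_iSup k n hn)

end A0Main

open A0Aux A0Model A0Main in
/-- A₀ is graded with wt(a) = 2n+1, wt(b) = 2, and the 6n+3 monomials a^s b^t,
0 ≤ s ≤ 2, 0 ≤ t ≤ 2n, form a k-basis of A₀; in particular dim_k A₀ = 6n+3. -/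
theorem A0_graded_basis (n : ℕ) (hn : 1 ≤ n) :
    (∃ 𝒜 : ℕ → Submodule k (A0 k n), Nonempty (GradedAlgebra 𝒜) ∧
      qa k n ∈ 𝒜 (2*n+1) ∧ qb k n ∈ 𝒜 2) ∧
    (LinearIndependent k
      (fun p : Fin 3 × Fin (2*n+1) => qa k n ^ (p.1 : ℕ) * qb k n ^ (p.2 : ℕ))) ∧
    (Submodule.span k
      (Set.range (fun p : Fin 3 × Fin (2*n+1) =>
        qa k n ^ (p.1 : ℕ) * qb k n ^ (p.2 : ℕ))) = ⊤) ∧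
    Module.finrank k (A0 k n) = 6*n+3 := by
  refine ⟨⟨Gr k n, ⟨?_⟩, ?_, ?_⟩, M_indep k n, span_top k n hn, ?_⟩
  · letI gm : SetLike.GradedMonoid (Gr k n) :=
      { one_mem := Gr_one k n
        mul_mem := Gr_mul k n }
    exact { toGradedMonoid := gm
            toDecomposition := (Gr_internal k n hn).chooseDecomposition }
  · have := mono_mem k n 1 0
    simpa using this
  · have := mono_mem k n 0 1
    simpa using this
  · have b : Module.Basis (Fin 3 × Fin (2*n+1)) k (A0 k n) :=
      Module.Basis.mk (M_indep k n) (by rw [span_top k n hn])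
    rw [Module.finrank_eq_card_basis b]
    simp
    ring

end
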